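/- Let n and m be positive integers with m < n, let A be an n×n real symmetric positive semidefinite matrix with rank(A) = n − m, let B be an m×n real matrix with rank m, and let W be an m×m real symmetric positive definite matrix such that A_W = A + BᵀWB is invertible. Then A · A_W⁻¹ · Bᵀ = 0, i.e., every column of A_W⁻¹Bᵀ lies in the kernel of A. -/
import Mathlib


open Matrix

/-- with `rank A = n - m` and `A_W = A + BᵀWB` invertible,
`A A_W⁻¹ Bᵀ = 0`, i.e. the columns of `A_W⁻¹ Bᵀ` lie in the kernel of `A`. -/
theorem leading_block_annihilates {n m : ℕ} (hn : 0 < n) (hm : 0 < m) (hmn : m < n)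
    (A : Matrix (Fin n) (Fin n) ℝ) (B : Matrix (Fin m) (Fin n) ℝ)
    (W : Matrix (Fin m) (Fin m) ℝ)
    (hA : A.PosSemidef) (hrA : A.rank = n - m) (hrB : B.rank = m)
    (hW : W.PosDef) (hAW : IsUnit (A + Bᵀ * W * B)) :
    A * (A + Bᵀ * W * B)⁻¹ * Bᵀ = 0 := by
  set M : Matrix (Fin n) (Fin n) ℝ := A + Bᵀ * W * B with hM
  have hdet : IsUnit M.det := (Matrix.isUnit_iff_isUnit_det M).mp hAW
  have hMi : M * M⁻¹ = 1 := Matrix.mul_nonsing_inv M hdet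
  set SA := LinearMap.range A.mulVecLin with hSA
  set SB := LinearMap.range Bᵀ.mulVecLin with hSB
  have htop : SA ⊔ SB = ⊤ := by
    rw [eq_top_iff]
    intro x _
    have hx : x = M *ᵥ (M⁻¹ *ᵥ x) := by
      rw [Matrix.mulVec_mulVec, hMi, Matrix.one_mulVec]
    have hx2 : M *ᵥ (M⁻¹ *ᵥ x)
        = A *ᵥ (M⁻¹ *ᵥ x) + Bᵀ *ᵥ ((W * B) *ᵥ (M⁻¹ *ᵥ x)) := by
      rw [hM, Matrix.add_mulVec]
      congr 1
      rw [Matrix.mul_assoc, ← Matrix.mulVec_mulVec]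
    rw [hx, hx2]
    exact Submodule.add_mem_sup ⟨_, rfl⟩ ⟨_, rfl⟩
  have hrBT : (Bᵀ).rank = m := by rw [Matrix.rank_transpose]; exact hrB
  have hfA : Module.finrank ℝ SA = n - m := hrA
  have hfB : Module.finrank ℝ SB = m := hrBT
  have hbot : SA ⊓ SB = ⊥ := by
    have h1 := Submodule.finrank_sup_add_finrank_inf_eq SA SB
    rw [htop, hfA, hfB] at h1
    have h2 : Module.finrank ℝ (⊤ : Submodule ℝ (Fin n → ℝ)) = n := by simp
    rw [h2] at h1
    have h3 : n - m + m = n := Nat.sub_add_cancel hmn.le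
    have h4 : Module.finrank ℝ ↥(SA ⊓ SB) = 0 := by omega
    exact Submodule.finrank_eq_zero.mp h4
  have key : A * M⁻¹ * Bᵀ = Bᵀ * (1 - W * B * M⁻¹ * Bᵀ) := by
    have hA' : A = M - Bᵀ * W * B := (add_sub_cancel_right A (Bᵀ * W * B)).symm
    rw [hA', Matrix.sub_mul, Matrix.sub_mul, hMi, Matrix.one_mul, Matrix.mul_sub,
      Matrix.mul_one]
    simp [Matrix.mul_assoc]
  have hz : ∀ v : Fin m → ℝ, (A * M⁻¹ * Bᵀ) *ᵥ v = 0 := by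
    intro v
    have h1 : (A * M⁻¹ * Bᵀ) *ᵥ v ∈ SA :=
      ⟨(M⁻¹ * Bᵀ) *ᵥ v, by
        simp [Matrix.mulVecLin_apply, Matrix.mulVec_mulVec, Matrix.mul_assoc]⟩
    have h2 : (A * M⁻¹ * Bᵀ) *ᵥ v ∈ SB :=
      ⟨(1 - W * B * M⁻¹ * Bᵀ) *ᵥ v, by
        rw [Matrix.mulVecLin_apply, Matrix.mulVec_mulVec, ← key]⟩
    have := hbot ▸ (Submodule.mem_inf.mpr ⟨h1, h2⟩)
    exact (Submodule.mem_bot _).mp this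
  ext i j
  have := congrFun (hz (Pi.single j 1)) i
  simpa [Matrix.mulVec_single] using this
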